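/- Let t > 0 and let n1, n2 ≥ 1 be integers. Let z1, z2 be integers with z1 < n1 and z2 < n2. Then the sum ∑_{k=0}^{n2−1} ψ_{n1−n2+k}(z1) · φ_k(z2) equals (−1/(2πi)) ∮_{|v|=ρ} dv (1+v)^{z2+n1−n2} (−v)^{−(z1−n1+n2+1)} e^{−t(1+2v)}, where the contour is a positively oriented circle of radius ρ ∈ (0,1) centered at the origin. (This is the main term of the extended kernel for the TASEP with alternating initial configuration, Theorem 2.2.) -/

import Mathlib

open Complex MeasureTheory Metric Set intervalIntegral

/-- `ψ_k(z) = ((-1)^k/(2πi)) ∮_{|w|=r} dw w^(-z-1) e^((w-1)t) ((w-1)w)^k`, with the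
contour a positively oriented circle of radius `r ∈ (0,1)` centered at the origin. -/
noncomputable def psi (t r : ℝ) (k z : ℤ) : ℂ :=
  ((-1 : ℂ) ^ k / (2 * ↑Real.pi * Complex.I)) *
    ∮ w in C(0, r), w ^ (-z - 1) * Complex.exp ((w - 1) * ↑t) * ((w - 1) * w) ^ k

/-- `φ_k(z) = ((-1)^k/(2πi)) ∮_{|v|=ρ} dv v⁻¹ (1+2v) e^(-vt) (1+v)^(z-1) (v(1+v))^(-k)`,
with the contour a positively oriented circle of radius `ρ ∈ (0,1)` centered at the origin. -/
noncomputable def phi (t ρ : ℝ) (k : ℕ) (z : ℤ) : ℂ :=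
  ((-1 : ℂ) ^ k / (2 * ↑Real.pi * Complex.I)) *
    ∮ v in C(0, ρ), v⁻¹ * (1 + 2 * v) * Complex.exp (-v * ↑t) * (1 + v) ^ (z - 1) *
      (v * (1 + v)) ^ (-(k : ℤ))


namespace S0Aux

/-- substitution `w = -z` in a circle integral centered at 0 -/
lemma circleIntegral_neg_comp (f : ℂ → ℂ) (r : ℝ) :
    (∮ z in C(0, r), f z) = ∮ z in C(0, r), -f (-z) := by
  have key : ∀ θ : ℝ, circleMap 0 r (θ + Real.pi) = -circleMap 0 r θ := by
    intro θ
    simp only [circleMap, zero_add]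
    push_cast
    rw [add_mul, Complex.exp_add]
    simp [Complex.exp_pi_mul_I]
  have hper : Function.Periodic
      (fun θ : ℝ => deriv (circleMap 0 r) θ • f (circleMap 0 r θ)) (2 * Real.pi) := by
    intro θ
    simp [deriv_circleMap, (periodic_circleMap 0 r θ : _)]
  calc (∮ z in C(0, r), f z)
      = ∫ θ in (0:ℝ)..2 * Real.pi, deriv (circleMap 0 r) θ • f (circleMap 0 r θ) := rfl
    _ = ∫ θ in Real.pi..Real.pi + 2 * Real.pi,
          deriv (circleMap 0 r) θ • f (circleMap 0 r θ) := by
        rw [hper.intervalIntegral_add_eq Real.pi 0]; simp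
    _ = ∫ θ in (0:ℝ)..2 * Real.pi,
          deriv (circleMap 0 r) (θ + Real.pi) • f (circleMap 0 r (θ + Real.pi)) := by
        rw [intervalIntegral.integral_comp_add_right
          (fun θ => deriv (circleMap 0 r) θ • f (circleMap 0 r θ)) Real.pi]
        norm_num [add_comm]
    _ = ∮ z in C(0, r), -f (-z) := by
        refine intervalIntegral.integral_congr fun θ _ => ?_
        simp only [deriv_circleMap, key, smul_eq_mul]
        ring


lemma circleIntegral_finset_sum {ι : Type*} (s : Finset ι) (f : ι → ℂ → ℂ) (c : ℂ) (R : ℝ)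
    (h : ∀ i ∈ s, CircleIntegrable (f i) c R) :
    (∮ z in C(c, R), ∑ i ∈ s, f i z) = ∑ i ∈ s, ∮ z in C(c, R), f i z := by
  simp only [circleIntegral]
  rw [← intervalIntegral.integral_finset_sum
    (fun i hi => ((circleIntegrable_iff R).mp (h i hi)))]
  refine intervalIntegral.integral_congr fun θ _ => ?_
  exact Finset.smul_sum

lemma circleIntegral_swap (f : ℂ → ℂ → ℂ) (r1 r2 : ℝ)
    (h : Continuous fun p : ℝ × ℝ => f (circleMap 0 r1 p.1) (circleMap 0 r2 p.2)) :
    (∮ u in C(0, r1), ∮ v in C(0, r2), f u v) = ∮ v in C(0, r2), ∮ u in C(0, r1), f u v := by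
  have h2 : (0:ℝ) ≤ 2 * Real.pi := by positivity
  have hg : Continuous fun p : ℝ × ℝ =>
      (deriv (circleMap 0 r1) p.1 * deriv (circleMap 0 r2) p.2) •
        f (circleMap 0 r1 p.1) (circleMap 0 r2 p.2) := by
    refine Continuous.smul (f := fun p : ℝ × ℝ => deriv (circleMap 0 r1) p.1 * deriv (circleMap 0 r2) p.2) ?_ h
    have d1 : Continuous (deriv (circleMap 0 r1)) := by
      have : deriv (circleMap 0 r1) = fun θ => circleMap 0 r1 θ * I := funext (deriv_circleMap 0 r1)
      rw [this]; exact (continuous_circleMap 0 r1).mul continuous_const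
    have d2 : Continuous (deriv (circleMap 0 r2)) := by
      have : deriv (circleMap 0 r2) = fun θ => circleMap 0 r2 θ * I := funext (deriv_circleMap 0 r2)
      rw [this]; exact (continuous_circleMap 0 r2).mul continuous_const
    exact (d1.comp continuous_fst).mul (d2.comp continuous_snd)
  have hint : Integrable (Function.uncurry fun θ φ : ℝ =>
      (deriv (circleMap 0 r1) θ * deriv (circleMap 0 r2) φ) •
        f (circleMap 0 r1 θ) (circleMap 0 r2 φ))
      ((volume.restrict (Ioc (0:ℝ) (2 * Real.pi))).prod
        (volume.restrict (Ioc (0:ℝ) (2 * Real.pi)))) := by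
    rw [Measure.prod_restrict]
    exact (hg.continuousOn.integrableOn_compact (isCompact_Icc.prod isCompact_Icc)).mono_set
      (Set.prod_mono Ioc_subset_Icc_self Ioc_subset_Icc_self)
  calc (∮ u in C(0, r1), ∮ v in C(0, r2), f u v)
      = ∫ θ in Ioc (0:ℝ) (2 * Real.pi), ∫ φ in Ioc (0:ℝ) (2 * Real.pi),
          (deriv (circleMap 0 r1) θ * deriv (circleMap 0 r2) φ) •
            f (circleMap 0 r1 θ) (circleMap 0 r2 φ) := by
        rw [circleIntegral, intervalIntegral.integral_of_le h2]
        refine setIntegral_congr_fun measurableSet_Ioc fun θ _ => ?_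
        rw [circleIntegral, intervalIntegral.integral_of_le h2, ← MeasureTheory.integral_smul]
        refine setIntegral_congr_fun measurableSet_Ioc fun φ _ => ?_
        rw [smul_smul]
    _ = ∫ φ in Ioc (0:ℝ) (2 * Real.pi), ∫ θ in Ioc (0:ℝ) (2 * Real.pi),
          (deriv (circleMap 0 r1) θ * deriv (circleMap 0 r2) φ) •
            f (circleMap 0 r1 θ) (circleMap 0 r2 φ) :=
        MeasureTheory.integral_integral_swap hint
    _ = ∮ v in C(0, r2), ∮ u in C(0, r1), f u v := by
        rw [circleIntegral, intervalIntegral.integral_of_le h2]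
        refine setIntegral_congr_fun measurableSet_Ioc fun φ _ => ?_
        rw [circleIntegral, intervalIntegral.integral_of_le h2, ← MeasureTheory.integral_smul]
        refine setIntegral_congr_fun measurableSet_Ioc fun θ _ => ?_
        rw [smul_smul, mul_comm]

/-- circle integrals over radii in (0,1) agree for f holomorphic on the punctured unit disc -/
lemma radius_indep (f : ℂ → ℂ) {r1 r2 : ℝ} (h1 : r1 ∈ Set.Ioo (0:ℝ) 1)
    (h2 : r2 ∈ Set.Ioo (0:ℝ) 1)
    (hf : ∀ z : ℂ, z ≠ 0 → ‖z‖ < 1 → DifferentiableAt ℂ f z) :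
    (∮ z in C(0, r1), f z) = ∮ z in C(0, r2), f z := by
  have key : ∀ s1 s2 : ℝ, s1 ∈ Set.Ioo (0:ℝ) 1 → s2 ∈ Set.Ioo (0:ℝ) 1 → s1 ≤ s2 →
      (∮ z in C(0, s2), f z) = ∮ z in C(0, s1), f z := by
    intro s1 s2 hs1 hs2 hle
    refine Complex.circleIntegral_eq_of_differentiable_on_annulus_off_countable hs1.1 hle
      Set.countable_empty ?_ ?_
    · intro z hz
      have hz0 : z ≠ 0 := by
        intro h; rw [h] at hz
        simp only [Set.mem_diff, Metric.mem_closedBall, Metric.mem_ball] at hz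
        exact hz.2 (by simpa using hs1.1)
      have hz1 : ‖z‖ < 1 := by
        have := hz.1
        simp only [Metric.mem_closedBall, Complex.dist_eq, sub_zero] at this
        exact lt_of_le_of_lt this hs2.2
      exact (hf z hz0 hz1).continuousAt.continuousWithinAt
    · intro z hz
      have hz' := hz.1
      simp only [Set.mem_diff, Metric.mem_ball, Metric.mem_closedBall, Complex.dist_eq,
        sub_zero, not_le] at hz'
      exact hf z (fun h => by simp [h] at hz'; linarith [hz'.2, hs1.1]) (hz'.1.trans hs2.2)
  rcases le_total r1 r2 with h | h
  · exact (key r1 r2 h1 h2 h).symm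
  · exact key r2 r1 h2 h1 h

lemma mem_sphere' {r : ℝ} {z : ℂ} (h : z ∈ sphere (0:ℂ) r) : ‖z‖ = r := by
  simpa [Complex.dist_eq] using h

lemma one_add_ne {u : ℂ} (h : ‖u‖ < 1) : (1:ℂ) + u ≠ 0 := by
  intro hc
  have : u = -1 := by linear_combination hc
  rw [this] at h; simp at h

noncomputable def Fn (t : ℝ) (z k : ℤ) : ℂ → ℂ :=
  fun u => u ^ (-z-1) * Complex.exp (-u*t) * (u*(1+u)) ^ k

noncomputable def Gn (t : ℝ) (z : ℤ) (k : ℕ) : ℂ → ℂ :=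
  fun v => v⁻¹ * (1 + 2*v) * Complex.exp (-v*t) * (1+v) ^ (z-1) * (v*(1+v)) ^ (-(k:ℤ))

lemma diffF (t : ℝ) (z k : ℤ) {u : ℂ} (hu : u ≠ 0) (hu1 : ‖u‖ < 1) :
    DifferentiableAt ℂ (Fn t z k) u := by
  apply DifferentiableAt.mul
  apply DifferentiableAt.mul
  · exact differentiableAt_id.zpow (Or.inl hu)
  · exact (differentiableAt_id.neg.mul_const (t:ℂ)).cexp
  · exact (differentiableAt_id.mul ((differentiableAt_const _).add differentiableAt_id)).zpow
      (Or.inl (mul_ne_zero hu (one_add_ne hu1)))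

lemma diffG (t : ℝ) (z : ℤ) (k : ℕ) {v : ℂ} (hv : v ≠ 0) (hv1 : ‖v‖ < 1) :
    DifferentiableAt ℂ (Gn t z k) v := by
  apply DifferentiableAt.mul
  apply DifferentiableAt.mul
  apply DifferentiableAt.mul
  apply DifferentiableAt.mul
  · exact differentiableAt_inv hv
  · exact (differentiableAt_const _).add ((differentiableAt_const _).mul differentiableAt_id)
  · exact (differentiableAt_id.neg.mul_const (t:ℂ)).cexp
  · exact ((differentiableAt_const _).add differentiableAt_id).zpow (Or.inl (one_add_ne hv1))
  · exact (differentiableAt_id.mul ((differentiableAt_const _).add differentiableAt_id)).zpow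
      (Or.inl (mul_ne_zero hv (one_add_ne hv1)))

lemma psi_eq (t : ℝ) {r : ℝ} (hr : r ∈ Set.Ioo (0:ℝ) 1) (k z : ℤ) :
    psi t r k z = ((-1:ℂ)^(k+z) * Complex.exp (-(t:ℂ)) / (2*Real.pi*Complex.I)) *
      ∮ u in C(0, (4:ℝ)⁻¹), Fn t z k u := by
  have h4 : (4:ℝ)⁻¹ ∈ Set.Ioo (0:ℝ) 1 := by norm_num
  have step1 : (∮ w in C(0, r), w ^ (-z-1) * Complex.exp ((w-1) * (t:ℂ)) * ((w-1)*w) ^ k)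
      = ((-1:ℂ)^z * Complex.exp (-(t:ℂ))) * ∮ u in C(0, r), Fn t z k u := by
    rw [circleIntegral_neg_comp]
    rw [← circleIntegral.integral_const_mul]
    congr 1
    funext u
    have e1 : (-u : ℂ) ^ (-z-1) = (-1:ℂ)^(-z-1) * u ^ (-z-1) := by
      rw [← neg_one_mul, mul_zpow]
    have e2 : ((-u-1) * (-u) : ℂ) ^ k = (u*(1+u)) ^ k := by
      congr 1; ring
    have e3 : Complex.exp ((-u-1) * (t:ℂ)) = Complex.exp (-(t:ℂ)) * Complex.exp (-u*t) := by
      rw [← Complex.exp_add]; congr 1; ring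
    simp only [Fn, e1, e2, e3]
    have hne : (-1:ℂ) ≠ 0 := by norm_num
    have hb : ((-1:ℂ))^(z+1) * ((-1:ℂ))^(z+1) = 1 := by
      rw [← zpow_add₀ hne, show z+1+(z+1) = 2*(z+1) by ring, zpow_mul]
      norm_num
    have hab : ((-1:ℂ))^(-z-1) * ((-1:ℂ))^(z+1) = 1 := by
      rw [← zpow_add₀ hne, show -z-1+(z+1) = 0 by ring, zpow_zero]
    have e4 : ((-1:ℂ))^(-z-1) = -((-1:ℂ))^z := by
      have : ((-1:ℂ))^(-z-1) = ((-1:ℂ))^(z+1) := by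
        calc ((-1:ℂ))^(-z-1) = ((-1:ℂ))^(-z-1) * (((-1:ℂ))^(z+1) * ((-1:ℂ))^(z+1)) := by
              rw [hb, mul_one]
          _ = (((-1:ℂ))^(-z-1) * ((-1:ℂ))^(z+1)) * ((-1:ℂ))^(z+1) := by ring
          _ = ((-1:ℂ))^(z+1) := by rw [hab, one_mul]
      rw [this, zpow_add₀ hne, zpow_one]
      ring
    rw [e4]
    ring
  have step2 : (∮ u in C(0, r), Fn t z k u) = ∮ u in C(0, (4:ℝ)⁻¹), Fn t z k u :=
    radius_indep _ hr h4 (fun u hu hu1 => diffF t z k hu hu1)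
  rw [psi, step1, step2]
  rw [zpow_add₀ (by norm_num : (-1:ℂ) ≠ 0)]
  ring

noncomputable def gI (t : ℝ) (z1 z2 m : ℤ) (u : ℂ) : ℂ → ℂ := fun v =>
  (1+2*v) * Complex.exp (-v*t) * (1+v)^z2 *
    (u ^ (-z1-1) * (u*(1+u))^m * Complex.exp (-u*t)) / (u+v+1)

noncomputable def Jn (t : ℝ) (z1 z2 : ℤ) (n1 n2 : ℕ) : ℂ → ℂ → ℂ := fun u v =>
  u ^ ((n1:ℤ)-z1-1) * (1+u) ^ (n1:ℤ) * Complex.exp (-u*t) *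
    ((1+2*v) * Complex.exp (-v*t) * (1+v)^z2 * (v*(1+v)) ^ (-(n2:ℤ))) / ((v-u)*(u+v+1))

set_option maxHeartbeats 1000000 in
lemma key_identity (t : ℝ) (z1 z2 : ℤ) (n1 n2 : ℕ) {u v : ℂ}
    (hu : u ≠ 0) (hv : v ≠ 0) (hu1 : (1:ℂ)+u ≠ 0) (hv1 : (1:ℂ)+v ≠ 0)
    (hvu : v - u ≠ 0) (huv1 : u+v+1 ≠ 0) :
    ∑ k ∈ Finset.range n2, Fn t z1 ((n1:ℤ)-(n2:ℤ)+k) u * Gn t z2 k v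
      = (v-u)⁻¹ * gI t z1 z2 ((n1:ℤ)-(n2:ℤ)) u v - Jn t z1 z2 n1 n2 u v := by
  have hX : u*(1+u) ≠ 0 := mul_ne_zero hu hu1
  have hY : v*(1+v) ≠ 0 := mul_ne_zero hv hv1
  have hYX : v*(1+v) - u*(1+u) ≠ 0 := by
    have h : v*(1+v) - u*(1+u) = (v-u)*(u+v+1) := by ring
    rw [h]; exact mul_ne_zero hvu huv1
  have hfrac : (u*(1+u))/(v*(1+v)) ≠ 1 := by
    intro h
    rw [div_eq_one_iff_eq hY] at h
    exact hYX (by rw [h]; ring)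
  have hsummand : ∀ k ∈ Finset.range n2, Fn t z1 ((n1:ℤ)-(n2:ℤ)+k) u * Gn t z2 k v
      = (u ^ (-z1-1) * Complex.exp (-u*t) * (u*(1+u))^((n1:ℤ)-(n2:ℤ)) *
         (v⁻¹ * (1+2*v) * Complex.exp (-v*t) * (1+v)^(z2-1))) *
        ((u*(1+u))/(v*(1+v)))^k := by
    intro k _
    simp only [Fn, Gn]
    rw [zpow_add₀ hX, zpow_natCast, zpow_neg, zpow_natCast, div_pow]
    field_simp
  rw [Finset.sum_congr rfl hsummand, ← Finset.mul_sum, geom_sum_eq hfrac]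
  have hgen : ∀ X Y : ℂ, Y ≠ 0 → X - Y ≠ 0 →
      ((X/Y)^n2 - 1)/(X/Y - 1) = (Y * (X^n2 - Y^n2))/(Y^n2 * (X - Y)) := by
    intro X Y h1 h2
    field_simp
    rw [sub_mul, div_pow, div_mul_cancel₀ _ (pow_ne_zero _ h1), one_mul]
  have hXY'' : u*(1+u) - v*(1+v) ≠ 0 := fun h => hYX (by linear_combination -h)
  rw [hgen (u*(1+u)) (v*(1+v)) hY hXY'',
    show u*(1+u) - v*(1+v) = -((v-u)*(u+v+1)) from by ring]
  simp only [gI, Jn]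
  rw [show ((n1:ℤ)-z1-1) = (-z1-1) + (n1:ℤ) by ring, zpow_add₀ hu,
    zpow_natCast u n1, zpow_natCast (1+u) n1, zpow_neg, zpow_natCast]
  have hAX : (u:ℂ)^n1 * (1+u)^n1 = (u*(1+u))^((n1:ℤ)-(n2:ℤ)) * (u*(1+u))^n2 := by
    rw [← mul_pow, ← zpow_natCast (u*(1+u)) n2, ← zpow_add₀ hX, ← zpow_natCast (u*(1+u)) n1]
    congr 1
    ring
  have hz2 : ((1:ℂ)+v)^z2 = (1+v)^(z2-1)*(1+v) := by
    rw [← zpow_add_one₀ hv1, sub_add_cancel]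
  rw [hz2]
  rw [mul_assoc (u ^ (-z1-1)) ((u:ℂ)^n1) ((1+u)^n1), hAX]
  set A := (u*(1+u))^((n1:ℤ)-(n2:ℤ)) with hA
  set B := u ^ (-z1-1) with hB
  set C := ((1:ℂ)+v)^(z2-1) with hC
  have hfrac' : (u*(1+u))/(v*(1+v)) - 1 ≠ 0 := sub_ne_zero.mpr hfrac
  field_simp
  ring

lemma phi_eq (t : ℝ) {r : ℝ} (hr : r ∈ Set.Ioo (0:ℝ) 1) (k : ℕ) (z : ℤ) :
    phi t r k z = ((-1:ℂ)^k / (2*Real.pi*Complex.I)) *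
      ∮ v in C(0, (2:ℝ)⁻¹), Gn t z k v := by
  rw [phi]
  congr 1
  exact radius_indep _ hr (by norm_num) (fun v hv hv1 => diffG t z k hv hv1)

noncomputable def Wn (t : ℝ) (e b : ℤ) : ℂ → ℂ :=
  fun v => v ^ e * (1+v) ^ b * Complex.exp (-(2*(t:ℂ))*v)

lemma rhs_eq (t : ℝ) {ρ : ℝ} (hρ : ρ ∈ Set.Ioo (0:ℝ) 1) (e b : ℤ) :
    (∮ v in C(0,ρ), (1+v)^b * (-v)^e * Complex.exp (-(t:ℂ)*(1+2*v)))
      = ((-1:ℂ)^e * Complex.exp (-(t:ℂ))) * ∮ v in C(0,(4:ℝ)⁻¹), Wn t e b v := by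
  have h4 : (4:ℝ)⁻¹ ∈ Set.Ioo (0:ℝ) 1 := by norm_num
  have hd : ∀ z : ℂ, z ≠ 0 → ‖z‖ < 1 → DifferentiableAt ℂ
      (fun v : ℂ => (1+v)^b * (-v)^e * Complex.exp (-(t:ℂ)*(1+2*v))) z := by
    intro z hz hz1
    apply DifferentiableAt.mul
    apply DifferentiableAt.mul
    · exact ((differentiableAt_const _).add differentiableAt_id).zpow (Or.inl (one_add_ne hz1))
    · exact differentiableAt_id.neg.zpow (Or.inl (neg_ne_zero.mpr hz))
    · exact ((differentiableAt_const _).mul ((differentiableAt_const _).add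
        ((differentiableAt_const _).mul differentiableAt_id))).cexp
  rw [radius_indep _ hρ h4 hd, ← circleIntegral.integral_const_mul]
  congr 1
  funext v
  have e1 : (-v:ℂ)^e = (-1:ℂ)^e * v^e := by rw [← neg_one_mul, mul_zpow]
  have e2 : Complex.exp (-(t:ℂ)*(1+2*v)) =
      Complex.exp (-(t:ℂ)) * Complex.exp (-(2*(t:ℂ))*v) := by
    rw [← Complex.exp_add]; congr 1; ring
  simp only [Wn, e1, e2]
  ring

lemma abs_cm4 (θ : ℝ) : ‖circleMap 0 (4:ℝ)⁻¹ θ‖ = (4:ℝ)⁻¹ := by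
  rw [norm_circleMap_zero]; norm_num

lemma abs_cm2 (θ : ℝ) : ‖circleMap 0 (2:ℝ)⁻¹ θ‖ = (2:ℝ)⁻¹ := by
  rw [norm_circleMap_zero]; norm_num

lemma ne_zero_of_abs {u : ℂ} {r : ℝ} (h : ‖u‖ = r) (hr : 0 < r) : u ≠ 0 := by
  intro h0; rw [h0] at h; simp at h; rw [← h] at hr; exact lt_irrefl _ hr

lemma vu_ne {u v : ℂ} (hu : ‖u‖ ≤ 4⁻¹) (hv : ‖v‖ = 2⁻¹) : v - u ≠ 0 := by
  intro h
  have : v = u := sub_eq_zero.mp h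
  rw [this] at hv; rw [hv] at hu; norm_num at hu

lemma uv1_ne {u v : ℂ} (hu : ‖u‖ ≤ 4⁻¹) (hv : ‖v‖ ≤ 2⁻¹) :
    u + v + 1 ≠ 0 := by
  have habs : ‖u+v‖ < 1 :=
    lt_of_le_of_lt (norm_add_le u v) (by linarith [hu, hv, (by norm_num : (4:ℝ)⁻¹ + 2⁻¹ < 1)])
  intro h
  exact one_add_ne habs (by linear_combination h)

lemma Jn_cont (t : ℝ) (z1 z2 : ℤ) (n1 n2 : ℕ) (hz1 : z1 < (n1:ℤ)) :
    Continuous fun p : ℝ × ℝ =>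
      Jn t z1 z2 n1 n2 (circleMap 0 (4:ℝ)⁻¹ p.1) (circleMap 0 (2:ℝ)⁻¹ p.2) := by
  have hc1 : Continuous fun p : ℝ × ℝ => circleMap 0 (4:ℝ)⁻¹ p.1 :=
    (continuous_circleMap _ _).comp continuous_fst
  have hc2 : Continuous fun p : ℝ × ℝ => circleMap 0 (2:ℝ)⁻¹ p.2 :=
    (continuous_circleMap _ _).comp continuous_snd
  unfold Jn
  apply Continuous.div
  · apply Continuous.mul
    apply Continuous.mul
    apply Continuous.mul
    · exact hc1.zpow₀ _ (fun p => Or.inr (by omega))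
    · exact (continuous_const.add hc1).zpow₀ _ (fun p => Or.inr (Int.natCast_nonneg n1))
    · exact (hc1.neg.mul continuous_const).cexp
    · apply Continuous.mul
      apply Continuous.mul
      apply Continuous.mul
      · exact continuous_const.add (continuous_const.mul hc2)
      · exact (hc2.neg.mul continuous_const).cexp
      · exact (continuous_const.add hc2).zpow₀ _
          (fun p => Or.inl (one_add_ne (by rw [abs_cm2]; norm_num)))
      · exact (hc2.mul (continuous_const.add hc2)).zpow₀ _
          (fun p => Or.inl (mul_ne_zero (ne_zero_of_abs (abs_cm2 p.2) (by norm_num))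
            (one_add_ne (by rw [abs_cm2]; norm_num))))
  · exact (hc2.sub hc1).mul ((hc1.add hc2).add continuous_const)
  · intro p
    exact mul_ne_zero (vu_ne (le_of_eq (abs_cm4 p.1)) (abs_cm2 p.2))
      (uv1_ne (le_of_eq (abs_cm4 p.1)) (le_of_eq (abs_cm2 p.2)))

lemma Jn_ci (t : ℝ) (z1 z2 : ℤ) (n1 n2 : ℕ) (hz1 : z1 < (n1:ℤ)) :
    CircleIntegrable (fun u => ∮ v in C(0,(2:ℝ)⁻¹), Jn t z1 z2 n1 n2 u v) 0 (4:ℝ)⁻¹ := by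
  have hcont : Continuous fun θ : ℝ =>
      ∮ v in C(0,(2:ℝ)⁻¹), Jn t z1 z2 n1 n2 (circleMap 0 (4:ℝ)⁻¹ θ) v := by
    have heq : (fun θ : ℝ => ∮ v in C(0,(2:ℝ)⁻¹), Jn t z1 z2 n1 n2 (circleMap 0 (4:ℝ)⁻¹ θ) v)
        = fun θ : ℝ => ∫ φ in (0:ℝ)..(2*Real.pi), (fun θ φ => deriv (circleMap 0 (2:ℝ)⁻¹) φ •
            Jn t z1 z2 n1 n2 (circleMap 0 (4:ℝ)⁻¹ θ) (circleMap 0 (2:ℝ)⁻¹ φ)) θ φ := rfl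
    rw [heq]
    apply continuous_parametric_intervalIntegral_of_continuous'
    have hd2 : Continuous fun p : ℝ × ℝ => deriv (circleMap 0 (2:ℝ)⁻¹) p.2 := by
      have h : deriv (circleMap 0 (2:ℝ)⁻¹) = fun θ => circleMap 0 (2:ℝ)⁻¹ θ * Complex.I :=
        funext (deriv_circleMap 0 (2:ℝ)⁻¹)
      rw [h]
      exact ((continuous_circleMap _ _).comp continuous_snd).mul continuous_const
    exact hd2.smul (Jn_cont t z1 z2 n1 n2 hz1)
  exact hcont.intervalIntegrable _ _

lemma Jn_inner_zero (t : ℝ) (z1 z2 : ℤ) (n1 n2 : ℕ) (hz1 : z1 < (n1:ℤ))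
    {v : ℂ} (hv : ‖v‖ = 2⁻¹) :
    (∮ u in C(0,(4:ℝ)⁻¹), Jn t z1 z2 n1 n2 u v) = 0 := by
  have hdiff : ∀ u ∈ closedBall (0:ℂ) (4:ℝ)⁻¹,
      DifferentiableAt ℂ (fun u => Jn t z1 z2 n1 n2 u v) u := by
    intro u hu
    have habs : ‖u‖ ≤ 4⁻¹ := by
      simpa [Complex.dist_eq] using hu
    unfold Jn
    apply DifferentiableAt.div
    · apply DifferentiableAt.mul
      apply DifferentiableAt.mul
      apply DifferentiableAt.mul
      · exact differentiableAt_id.zpow (Or.inr (by omega))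
      · exact ((differentiableAt_const _).add differentiableAt_id).zpow
          (Or.inr (Int.natCast_nonneg n1))
      · exact (differentiableAt_id.neg.mul_const _).cexp
      · exact differentiableAt_const _
    · exact ((differentiableAt_const _).sub differentiableAt_id).mul
        ((differentiableAt_id.add (differentiableAt_const _)).add (differentiableAt_const _))
    · exact mul_ne_zero (vu_ne habs hv) (uv1_ne habs (le_of_eq hv))
  apply Complex.circleIntegral_eq_zero_of_differentiable_on_off_countable
    (by norm_num : (0:ℝ) ≤ 4⁻¹) Set.countable_empty
  · exact fun u hu => (hdiff u hu).continuousAt.continuousWithinAt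
  · exact fun u hu => hdiff u (ball_subset_closedBall hu.1)

lemma cauchy_inner (t : ℝ) (z1 z2 m : ℤ) {u : ℂ} (hu : ‖u‖ = 4⁻¹) :
    (∮ v in C(0,(2:ℝ)⁻¹), (v - u)⁻¹ • gI t z1 z2 m u v)
      = (2 * ↑Real.pi * Complex.I : ℂ) • gI t z1 z2 m u u := by
  apply DifferentiableOn.circleIntegral_sub_inv_smul
  · intro v hv
    have habs : ‖v‖ ≤ 2⁻¹ := by simpa [Complex.dist_eq] using hv
    apply DifferentiableAt.differentiableWithinAt
    unfold gI
    apply DifferentiableAt.div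
    · apply DifferentiableAt.mul
      apply DifferentiableAt.mul
      apply DifferentiableAt.mul
      · exact (differentiableAt_const _).add ((differentiableAt_const _).mul differentiableAt_id)
      · exact (differentiableAt_id.neg.mul_const _).cexp
      · exact ((differentiableAt_const _).add differentiableAt_id).zpow
          (Or.inl (one_add_ne (lt_of_le_of_lt habs (by norm_num))))
      · exact differentiableAt_const _
    · exact ((differentiableAt_const _).add differentiableAt_id).add (differentiableAt_const _)
    · exact uv1_ne (le_of_eq hu) habs
  · simp [Complex.dist_eq, mem_ball, hu]
    norm_num

lemma ci_const_mul {f : ℂ → ℂ} {c : ℂ} {R : ℝ} (h : CircleIntegrable f c R) (a : ℂ) :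
    CircleIntegrable (fun z => a * f z) c R :=
  IntervalIntegrable.const_mul h a

lemma gI_diffAt (t : ℝ) (z1 z2 m : ℤ) {u v : ℂ} (hu : ‖u‖ = 4⁻¹)
    (hv : ‖v‖ ≤ 2⁻¹) : DifferentiableAt ℂ (gI t z1 z2 m u) v := by
  unfold gI
  apply DifferentiableAt.div
  · apply DifferentiableAt.mul
    apply DifferentiableAt.mul
    apply DifferentiableAt.mul
    · exact (differentiableAt_const _).add ((differentiableAt_const _).mul differentiableAt_id)
    · exact (differentiableAt_id.neg.mul_const _).cexp
    · exact ((differentiableAt_const _).add differentiableAt_id).zpow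
        (Or.inl (one_add_ne (lt_of_le_of_lt hv (by norm_num))))
    · exact differentiableAt_const _
  · exact ((differentiableAt_const _).add differentiableAt_id).add (differentiableAt_const _)
  · exact uv1_ne (le_of_eq hu) hv

lemma Jn_v_diffAt (t : ℝ) (z1 z2 : ℤ) (n1 n2 : ℕ) {u v : ℂ} (hu : ‖u‖ = 4⁻¹)
    (hv : ‖v‖ = 2⁻¹) : DifferentiableAt ℂ (fun v => Jn t z1 z2 n1 n2 u v) v := by
  have hv1 : (1:ℂ) + v ≠ 0 := one_add_ne (by rw [hv]; norm_num)
  have hv0 : v ≠ 0 := ne_zero_of_abs hv (by norm_num)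
  unfold Jn
  apply DifferentiableAt.div
  · apply DifferentiableAt.mul
    · exact differentiableAt_const _
    · apply DifferentiableAt.mul
      apply DifferentiableAt.mul
      apply DifferentiableAt.mul
      · exact (differentiableAt_const _).add ((differentiableAt_const _).mul differentiableAt_id)
      · exact (differentiableAt_id.neg.mul_const _).cexp
      · exact ((differentiableAt_const _).add differentiableAt_id).zpow (Or.inl hv1)
      · exact (differentiableAt_id.mul ((differentiableAt_const _).add differentiableAt_id)).zpow
          (Or.inl (mul_ne_zero hv0 hv1))
  · exact (differentiableAt_id.sub (differentiableAt_const _)).mul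
      (((differentiableAt_const _).add differentiableAt_id).add (differentiableAt_const _))
  · exact mul_ne_zero (vu_ne (le_of_eq hu) hv) (uv1_ne (le_of_eq hu) (le_of_eq hv))

lemma gI_diag (t : ℝ) (z1 z2 m : ℤ) {u : ℂ} (hu : ‖u‖ = 4⁻¹) :
    gI t z1 z2 m u u
      = u ^ (-z1-1) * (u*(1+u))^m * (1+u)^z2 * Complex.exp (-(2*(t:ℂ))*u) := by
  have h2u : (1:ℂ) + 2*u ≠ 0 := by
    have habs : ‖2*u‖ < 1 := by
      rw [norm_mul, hu]; simp; norm_num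
    exact one_add_ne habs
  have hexp : Complex.exp (-u*(t:ℂ)) * Complex.exp (-u*(t:ℂ)) =
      Complex.exp (-(2*(t:ℂ))*u) := by
    rw [← Complex.exp_add]; congr 1; ring
  simp only [gI]
  rw [show u+u+1 = 1+2*u from by ring]
  rw [← hexp]
  field_simp

end S0Aux

open S0Aux in
set_option maxHeartbeats 1000000 in
/-- For `t > 0`, integers `n1, n2 ≥ 1` and integers `z1 < n1`, `z2 < n2`,
`∑_{k=0}^{n2-1} ψ_{n1-n2+k}(z1) φ_k(z2)
  = (-1/(2πi)) ∮_{|v|=ρ} dv (1+v)^(z2+n1-n2) (-v)^(-(z1-n1+n2+1)) e^(-t(1+2v))`,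
the contour being a positively oriented circle of any radius `ρ ∈ (0,1)` centered at the
origin (the main term of the extended kernel for the alternating initial configuration). -/
theorem statement0 (t : ℝ) (ht : 0 < t) (n1 n2 : ℕ) (hn1 : 1 ≤ n1) (hn2 : 1 ≤ n2)
    (z1 z2 : ℤ) (hz1 : z1 < (n1 : ℤ)) (hz2 : z2 < (n2 : ℤ))
    (r r' ρ : ℝ) (hr : r ∈ Set.Ioo (0 : ℝ) 1) (hr' : r' ∈ Set.Ioo (0 : ℝ) 1)
    (hρ : ρ ∈ Set.Ioo (0 : ℝ) 1) :
    ∑ k ∈ Finset.range n2, psi t r ((n1 : ℤ) - (n2 : ℤ) + k) z1 * phi t r' k z2 =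
      (-1) / (2 * ↑Real.pi * Complex.I) *
        ∮ v in C(0, ρ), (1 + v) ^ (z2 + (n1 : ℤ) - (n2 : ℤ)) *
          (-v) ^ (-(z1 - (n1 : ℤ) + (n2 : ℤ) + 1)) * Complex.exp (-↑t * (1 + 2 * v)) := by
  classical
  have hne : (-1:ℂ) ≠ 0 := by norm_num
  have hΛ : (2 * (Real.pi:ℂ) * Complex.I) ≠ 0 :=
    mul_ne_zero (mul_ne_zero two_ne_zero (Complex.ofReal_ne_zero.mpr Real.pi_ne_zero))
      Complex.I_ne_zero
  set m : ℤ := (n1:ℤ) - (n2:ℤ) with hm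
  set ee : ℤ := -(z1 - (n1:ℤ) + (n2:ℤ) + 1) with hee
  set bb : ℤ := z2 + (n1:ℤ) - (n2:ℤ) with hbb
  set Λ : ℂ := 2 * (Real.pi:ℂ) * Complex.I with hΛdef
  -- continuity facts
  have hGci : ∀ k : ℕ, CircleIntegrable (Gn t z2 k) 0 (2:ℝ)⁻¹ := by
    intro k
    refine ContinuousOn.circleIntegrable (by norm_num) (fun v hv => ?_)
    have habs := mem_sphere' hv
    exact (diffG t z2 k (ne_zero_of_abs habs (by norm_num))
      (by rw [habs]; norm_num)).continuousAt.continuousWithinAt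
  have hFcont : ∀ j : ℤ, ContinuousOn (Fn t z1 j) (sphere (0:ℂ) (4:ℝ)⁻¹) := by
    intro j v hv
    have habs := mem_sphere' hv
    exact (diffF t z1 j (ne_zero_of_abs habs (by norm_num))
      (by rw [habs]; norm_num)).continuousAt.continuousWithinAt
  -- step 1: each summand as product of two normalized circle integrals
  have hsign : ∀ k : ℕ, ((-1:ℂ)^(m + (k:ℤ) + z1)) * ((-1:ℂ)^k) = (-1:ℂ)^(m+z1) := by
    intro k
    rw [← zpow_natCast (-1:ℂ) k, ← zpow_add₀ hne,
      show m + (k:ℤ) + z1 + (k:ℤ) = (m+z1) + 2*(k:ℤ) from by ring, zpow_add₀ hne, zpow_mul]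
    norm_num
  have hterm : ∀ k ∈ Finset.range n2, psi t r (m + (k:ℤ)) z1 * phi t r' k z2
      = ((-1:ℂ)^(m+z1) * Complex.exp (-(t:ℂ)) / (Λ*Λ)) *
        ((∮ u in C(0,(4:ℝ)⁻¹), Fn t z1 (m+(k:ℤ)) u) * (∮ v in C(0,(2:ℝ)⁻¹), Gn t z2 k v)) := by
    intro k _
    rw [psi_eq t hr (m+(k:ℤ)) z1, phi_eq t hr' k z2]
    rw [← hsign k]
    field_simp
    ring
  rw [Finset.sum_congr rfl hterm, ← Finset.mul_sum]
  -- step 2: products to double integrals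
  have hstep2 : ∀ k ∈ Finset.range n2,
      (∮ u in C(0,(4:ℝ)⁻¹), Fn t z1 (m+(k:ℤ)) u) * (∮ v in C(0,(2:ℝ)⁻¹), Gn t z2 k v)
      = ∮ u in C(0,(4:ℝ)⁻¹), ∮ v in C(0,(2:ℝ)⁻¹), Fn t z1 (m+(k:ℤ)) u * Gn t z2 k v := by
    intro k _
    have h1 : (∮ u in C(0,(4:ℝ)⁻¹), Fn t z1 (m+(k:ℤ)) u * (∮ v in C(0,(2:ℝ)⁻¹), Gn t z2 k v))
        = (∮ u in C(0,(4:ℝ)⁻¹), Fn t z1 (m+(k:ℤ)) u) * (∮ v in C(0,(2:ℝ)⁻¹), Gn t z2 k v) := by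
      simpa [smul_eq_mul] using circleIntegral.integral_smul_const (Fn t z1 (m+(k:ℤ)))
        (∮ v in C(0,(2:ℝ)⁻¹), Gn t z2 k v) 0 (4:ℝ)⁻¹
    rw [← h1]
    congr 1
    funext u
    exact (circleIntegral.integral_const_mul (Fn t z1 (m+(k:ℤ)) u) _ 0 (2:ℝ)⁻¹).symm
  rw [Finset.sum_congr rfl hstep2]
  -- step 3: push sum inside both integrals
  have hsum1 : (∑ k ∈ Finset.range n2,
        ∮ u in C(0,(4:ℝ)⁻¹), ∮ v in C(0,(2:ℝ)⁻¹), Fn t z1 (m+(k:ℤ)) u * Gn t z2 k v)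
      = ∮ u in C(0,(4:ℝ)⁻¹), ∑ k ∈ Finset.range n2,
          ∮ v in C(0,(2:ℝ)⁻¹), Fn t z1 (m+(k:ℤ)) u * Gn t z2 k v := by
    refine (circleIntegral_finset_sum _ _ _ _ (fun k _ => ?_)).symm
    have heq : (fun u => ∮ v in C(0,(2:ℝ)⁻¹), Fn t z1 (m+(k:ℤ)) u * Gn t z2 k v)
        = fun u => Fn t z1 (m+(k:ℤ)) u * (∮ v in C(0,(2:ℝ)⁻¹), Gn t z2 k v) :=
      funext fun u => circleIntegral.integral_const_mul _ _ _ _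
    rw [heq]
    exact ContinuousOn.circleIntegrable (by norm_num) ((hFcont _).mul continuousOn_const)
  rw [hsum1]
  have hsum2 : (fun u => ∑ k ∈ Finset.range n2,
        ∮ v in C(0,(2:ℝ)⁻¹), Fn t z1 (m+(k:ℤ)) u * Gn t z2 k v)
      = fun u => ∮ v in C(0,(2:ℝ)⁻¹),
          ∑ k ∈ Finset.range n2, Fn t z1 (m+(k:ℤ)) u * Gn t z2 k v := by
    funext u
    exact (circleIntegral_finset_sum _ _ _ _ (fun k _ => ci_const_mul (hGci k) _)).symm
  rw [hsum2]
  -- step 4: inner integral evaluation on the sphere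
  have inner_eq : Set.EqOn
      (fun u => ∮ v in C(0,(2:ℝ)⁻¹),
        ∑ k ∈ Finset.range n2, Fn t z1 (m+(k:ℤ)) u * Gn t z2 k v)
      (fun u => Λ * (u ^ (-z1-1) * (u*(1+u))^m * (1+u)^z2 * Complex.exp (-(2*(t:ℂ))*u))
        - ∮ v in C(0,(2:ℝ)⁻¹), Jn t z1 z2 n1 n2 u v) (sphere (0:ℂ) (4:ℝ)⁻¹) := by
    intro u huS
    have habs := mem_sphere' huS
    have hu0 : u ≠ 0 := ne_zero_of_abs habs (by norm_num)
    have hu1 : (1:ℂ)+u ≠ 0 := one_add_ne (by rw [habs]; norm_num)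
    have hcongr : Set.EqOn
        (fun v => ∑ k ∈ Finset.range n2, Fn t z1 (m+(k:ℤ)) u * Gn t z2 k v)
        (fun v => (v - u)⁻¹ • gI t z1 z2 m u v - Jn t z1 z2 n1 n2 u v)
        (sphere (0:ℂ) (2:ℝ)⁻¹) := by
      intro v hvS
      have hvabs := mem_sphere' hvS
      have hv0 : v ≠ 0 := ne_zero_of_abs hvabs (by norm_num)
      have hv1 : (1:ℂ)+v ≠ 0 := one_add_ne (by rw [hvabs]; norm_num)
      simpa [smul_eq_mul] using key_identity t z1 z2 n1 n2 hu0 hv0 hu1 hv1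
        (vu_ne (le_of_eq habs) hvabs) (uv1_ne (le_of_eq habs) (le_of_eq hvabs))
    have hIci : CircleIntegrable (fun v => (v - u)⁻¹ • gI t z1 z2 m u v) 0 (2:ℝ)⁻¹ := by
      refine ContinuousOn.circleIntegrable (by norm_num) (fun v hvS => ?_)
      have hvabs := mem_sphere' hvS
      refine (ContinuousAt.smul (f := fun v : ℂ => (v - u)⁻¹) ?_ (gI_diffAt t z1 z2 m habs
        (le_of_eq hvabs)).continuousAt).continuousWithinAt
      exact (continuousAt_id.sub continuousAt_const).inv₀
        (vu_ne (le_of_eq habs) hvabs)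
    have hJci' : CircleIntegrable (fun v => Jn t z1 z2 n1 n2 u v) 0 (2:ℝ)⁻¹ := by
      refine ContinuousOn.circleIntegrable (by norm_num) (fun v hvS => ?_)
      exact (Jn_v_diffAt t z1 z2 n1 n2 habs (mem_sphere' hvS)).continuousAt.continuousWithinAt
    simp only
    rw [circleIntegral.integral_congr (by norm_num : (0:ℝ) ≤ 2⁻¹) hcongr,
      circleIntegral.integral_sub hIci hJci']
    congr 1
    rw [cauchy_inner t z1 z2 m habs, gI_diag t z1 z2 m habs, smul_eq_mul]
  rw [circleIntegral.integral_congr (by norm_num : (0:ℝ) ≤ 4⁻¹) inner_eq]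
  -- step 5: split outer integral; J part vanishes
  have hPci : CircleIntegrable (fun u =>
      Λ * (u ^ (-z1-1) * (u*(1+u))^m * (1+u)^z2 * Complex.exp (-(2*(t:ℂ))*u))) 0 (4:ℝ)⁻¹ := by
    refine ContinuousOn.circleIntegrable (by norm_num) (fun u huS => ?_)
    have habs := mem_sphere' huS
    have hu0 : u ≠ 0 := ne_zero_of_abs habs (by norm_num)
    have hu1 : (1:ℂ)+u ≠ 0 := one_add_ne (by rw [habs]; norm_num)
    refine (continuousAt_const.mul ?_).continuousWithinAt
    apply ContinuousAt.mul
    apply ContinuousAt.mul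
    apply ContinuousAt.mul
    · exact continuousAt_id.zpow₀ _ (Or.inl hu0)
    · exact (continuousAt_id.mul (continuousAt_const.add continuousAt_id)).zpow₀ _
        (Or.inl (mul_ne_zero hu0 hu1))
    · exact (continuousAt_const.add continuousAt_id).zpow₀ _ (Or.inl hu1)
    · exact (continuousAt_const.mul continuousAt_id).cexp
  rw [circleIntegral.integral_sub hPci (Jn_ci t z1 z2 n1 n2 hz1)]
  -- J double integral is zero
  have hJzero : (∮ u in C(0,(4:ℝ)⁻¹), ∮ v in C(0,(2:ℝ)⁻¹), Jn t z1 z2 n1 n2 u v) = 0 := by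
    rw [circleIntegral_swap _ _ _ (Jn_cont t z1 z2 n1 n2 hz1)]
    have : Set.EqOn (fun v => ∮ u in C(0,(4:ℝ)⁻¹), Jn t z1 z2 n1 n2 u v)
        (fun _ => (0:ℂ)) (sphere (0:ℂ) (2:ℝ)⁻¹) :=
      fun v hvS => Jn_inner_zero t z1 z2 n1 n2 hz1 (mem_sphere' hvS)
    rw [circleIntegral.integral_congr (by norm_num : (0:ℝ) ≤ 2⁻¹) this]
    simp [circleIntegral]
  rw [hJzero, sub_zero]
  -- step 6: identify with Wn and finish
  rw [circleIntegral.integral_const_mul]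
  have hW : Set.EqOn
      (fun u : ℂ => u ^ (-z1-1) * (u*(1+u))^m * (1+u)^z2 * Complex.exp (-(2*(t:ℂ))*u))
      (Wn t ee bb) (sphere (0:ℂ) (4:ℝ)⁻¹) := by
    intro u huS
    have habs := mem_sphere' huS
    have hu0 : u ≠ 0 := ne_zero_of_abs habs (by norm_num)
    have hu1 : (1:ℂ)+u ≠ 0 := one_add_ne (by rw [habs]; norm_num)
    simp only [Wn]
    rw [mul_zpow, show u ^ (-z1-1) * (u^m * (1+u)^m) * (1+u)^z2
        = (u ^ (-z1-1) * u^m) * ((1+u)^m * (1+u)^z2) from by ring,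
      ← zpow_add₀ hu0, ← zpow_add₀ hu1,
      show -z1-1+m = ee from by rw [hee, hm]; ring,
      show m + z2 = bb from by rw [hbb, hm]; ring]
  rw [circleIntegral.integral_congr (by norm_num : (0:ℝ) ≤ 4⁻¹) hW]
  rw [rhs_eq t hρ ee bb]
  have hsign2 : ((-1:ℂ))^(m+z1) = -((-1:ℂ))^ee := by
    have h1 : m + z1 = ee + (2*z1+1) := by rw [hee, hm]; ring
    rw [h1, zpow_add₀ hne, zpow_add₀ hne, zpow_mul, zpow_one]
    norm_num
  rw [hsign2]
  field_simp
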